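/- arXiv:1011.2549 — 2 statements merged into one kernel-verified Lean document; each statement's English description precedes it below -/
import Mathlib

section
/- Let A = T(u₁, u₂) be the free associative graded ℤ-algebra on generators u₁ of degree 2 and u₂ of degree 4, made a graded connected Hopf algebra by Δu₁ = u₁⊗1 + 1⊗u₁ and Δu₂ = u₂⊗1 + u₁⊗u₁ + 1⊗u₂, extended multiplicatively (this is H_*(ΩΣℂP²;ℤ)). Then for every λ ∈ ℤ the element u₂ + λ·u₁u₁ is not primitive (the primitivity condition forces 1 + 2λ = 0, which has no integer solution); consequently A is not isomorphic, as a graded Hopf algebra over ℤ, to any primitively generated (Lie-Hopf) Hopf algebra. -/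
/-!
STATEMENT 11 (Buchstaber–Grbić, Section 4.2): the Hopf algebra
`H_*(ΩΣℂP²;ℤ) = T(u₁,u₂)`, `|u₁| = 2`, `|u₂| = 4`, with
`Δu₁ = u₁⊗1 + 1⊗u₁`, `Δu₂ = u₂⊗1 + u₁⊗u₁ + 1⊗u₂` extended multiplicatively,
has no primitive element of the form `u₂ + λ·u₁u₁` (primitivity would force
`1 + 2λ = 0`), and consequently it is not primitively generated, i.e. it is
not isomorphic as a graded Hopf algebra over `ℤ` to a Lie-Hopf algebra.
(All generators have even degree, so no Koszul signs intervene and the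
ordinary tensor-product algebra structure is the correct one.)
-/

open scoped TensorProduct

noncomputable section

attribute [local instance 2000] Algebra.toModule

/-- The free associative `ℤ`-algebra `T(u₁, u₂)` on two generators;
as an algebra this is `H_*(ΩΣℂP²;ℤ)` (Bott–Samelson). -/
abbrev LoopHomCP2 : Type := FreeAlgebra ℤ (Fin 2)

/-- The generator `u₁`, of (homological) degree `2`. -/
def u₁ : LoopHomCP2 := FreeAlgebra.ι ℤ 0

/-- The generator `u₂`, of (homological) degree `4`. -/
def u₂ : LoopHomCP2 := FreeAlgebra.ι ℤ 1

/-- The comultiplication of `H_*(ΩΣℂP²;ℤ)`: the unique algebra homomorphism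
`T(u₁,u₂) → T(u₁,u₂) ⊗ T(u₁,u₂)` with `Δu₁ = u₁⊗1 + 1⊗u₁` and
`Δu₂ = u₂⊗1 + u₁⊗u₁ + 1⊗u₂`. -/
def Δ : LoopHomCP2 →ₐ[ℤ] LoopHomCP2 ⊗[ℤ] LoopHomCP2 :=
  FreeAlgebra.lift ℤ
    ![u₁ ⊗ₜ[ℤ] 1 + 1 ⊗ₜ[ℤ] u₁,
      u₂ ⊗ₜ[ℤ] 1 + u₁ ⊗ₜ[ℤ] u₁ + 1 ⊗ₜ[ℤ] u₂]

/-- Auxiliary algebra map sending both generators to `1`. -/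
def phi1 : LoopHomCP2 →ₐ[ℤ] ℤ := FreeAlgebra.lift ℤ ![1, 1]

/-- Auxiliary algebra map sending both generators to `0`. -/
def eps0 : LoopHomCP2 →ₐ[ℤ] ℤ := FreeAlgebra.lift ℤ ![0, 0]

/-- Lift a pair of functionals to the tensor product. -/
def psi (f g : LoopHomCP2 →ₐ[ℤ] ℤ) : (LoopHomCP2 ⊗[ℤ] LoopHomCP2) →ₐ[ℤ] ℤ :=
  Algebra.TensorProduct.lift f g fun _ _ => Commute.all _ _

@[simp] lemma psi_tmul (f g : LoopHomCP2 →ₐ[ℤ] ℤ) (x y : LoopHomCP2) :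
    psi f g (x ⊗ₜ[ℤ] y) = f x * g y := Algebra.TensorProduct.lift_tmul ..

@[simp] lemma phi1_u₁ : phi1 u₁ = 1 := by simp [phi1, u₁]
@[simp] lemma phi1_u₂ : phi1 u₂ = 1 := by simp [phi1, u₂]
@[simp] lemma eps0_u₁ : eps0 u₁ = 0 := by simp [eps0, u₁]
@[simp] lemma eps0_u₂ : eps0 u₂ = 0 := by simp [eps0, u₂]

@[simp] lemma Δ_u₁ : Δ u₁ = u₁ ⊗ₜ[ℤ] 1 + 1 ⊗ₜ[ℤ] u₁ := by simp [Δ, u₁]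
@[simp] lemma Δ_u₂ : Δ u₂ = u₂ ⊗ₜ[ℤ] 1 + u₁ ⊗ₜ[ℤ] u₁ + 1 ⊗ₜ[ℤ] u₂ := by simp [Δ, u₂]

lemma int_add_self_cast_zmod2 (n : ℤ) : ((n + n : ℤ) : ZMod 2) = 0 := by
  push_cast
  exact CharTwo.add_self_eq_zero _

/-- An element of a Hopf algebra is primitive if `Δa = a⊗1 + 1⊗a`. -/
def IsPrimitive (x : LoopHomCP2) : Prop :=
  Δ x = x ⊗ₜ[ℤ] 1 + 1 ⊗ₜ[ℤ] x

/-- For every `λ ∈ ℤ` the element `u₂ + λ·u₁u₁` is not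
primitive in `H_*(ΩΣℂP²;ℤ)` (primitivity forces `1 + 2λ = 0`, which has no
integer solution); consequently the Hopf algebra `H_*(ΩΣℂP²;ℤ)` is not
generated as an algebra by its primitive elements, that is, it is not
isomorphic (as a graded Hopf algebra over `ℤ`) to any primitively generated
(Lie-Hopf) Hopf algebra. -/
theorem loopHomCP2_not_lieHopf :
    (∀ lam : ℤ, ¬ IsPrimitive (u₂ + lam • (u₁ * u₁))) ∧
      Algebra.adjoin ℤ {x : LoopHomCP2 | IsPrimitive x} ≠ ⊤ := by
  constructor
  · intro lam h
    have := congrArg (psi phi1 phi1) h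
    simp [map_add, map_smul, map_mul, mul_add, add_mul] at this
    omega
  · set A₁ : LoopHomCP2 →ₐ[ℤ] ZMod 2 :=
      (Algebra.ofId ℤ (ZMod 2)).comp ((psi phi1 phi1).comp Δ) with hA₁
    set A₂ : LoopHomCP2 →ₐ[ℤ] ZMod 2 :=
      (Algebra.ofId ℤ (ZMod 2)).comp ((psi eps0 eps0).comp Δ) with hA₂
    intro htop
    have hle : Algebra.adjoin ℤ {x : LoopHomCP2 | IsPrimitive x} ≤
        AlgHom.equalizer A₁ A₂ := by
      apply Algebra.adjoin_le
      intro p hp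
      have hp' : Δ p = p ⊗ₜ[ℤ] 1 + 1 ⊗ₜ[ℤ] p := hp
      show A₁ p = A₂ p
      simp only [hA₁, hA₂, AlgHom.comp_apply, hp', map_add, psi_tmul, map_one,
        mul_one, one_mul]
      rw [CharTwo.add_self_eq_zero, CharTwo.add_self_eq_zero]
    have hu₂ : u₂ ∈ AlgHom.equalizer A₁ A₂ := hle (htop ▸ Algebra.mem_top)
    have h32 : A₁ u₂ = A₂ u₂ := hu₂
    simp [hA₁, hA₂, Algebra.ofId_apply] at h32
    exact absurd h32 (by decide)


end
end

section
/- Let H_b = ℤ⟨w₁, w₂, ...⟩ be the free associative graded ℤ-algebra on countably many generators w_n of degree 2n, made a graded connected Hopf algebra by Δw_n = Σ_{k=0}^n (n choose k) w_k⊗w_{n−k} (with w₀ = 1), extended multiplicatively; and let H_p = ℤ⟨ξ₁, ξ₂, ...⟩ be the free associative graded ℤ-algebra on generators ξ_n of degree 2n with every ξ_n primitive. Then H_b and H_p are isomorphic as graded Hopf algebras over ℤ. (Topologically, H_b ≅ H_*(ΩΣ(ΩΣS²);ℤ) and H_p ≅ H_*(ΩΣ(⋁_{i=1}^∞ S^{2i});ℤ),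 and the isomorphism is induced by looping the James splitting ΣΩΣS² ≃ Σ(⋁_{i=1}^∞ S^{2i}).) -/
/-!
STATEMENT 17 (Buchstaber–Grbić, Section 5): the free associative graded Hopf
algebra `H_b = ℤ⟨w₁, w₂, …⟩` (`deg w_n = 2n`) with the binomial coproduct
`Δw_n = Σ (n choose k) w_k ⊗ w_{n−k}` — topologically `H_*(ΩΣ(ΩΣS²);ℤ)` —
is isomorphic as a graded Hopf algebra over `ℤ` to the free associative
algebra `H_p = ℤ⟨ξ₁, ξ₂, …⟩` (`deg ξ_n = 2n`) with all `ξ_n` primitive —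
topologically `H_*(ΩΣ(⋁_{i≥1} S^{2i});ℤ)`.
(All generators have even degree, so no Koszul signs intervene.)
-/

open scoped TensorProduct

noncomputable section

attribute [local instance 2000] Algebra.toModule

/-- The free associative `ℤ`-algebra on countably many generators indexed by
`n ≥ 1`, the `n`-th generator having degree `2n`. -/
abbrev FreeZ : Type := FreeAlgebra ℤ ℕ+

/-- The generators: `w 0 = 1` and, for `n ≥ 1`, `w n` is the `n`-th free
generator (of degree `2n`). -/
def w : ℕ → FreeZ
  | 0 => 1
  | (n + 1) => FreeAlgebra.ι ℤ (⟨n + 1, Nat.succ_pos n⟩ : ℕ+)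

/-- The binomial comultiplication of `H_b = H_*(ΩΣ(ΩΣS²);ℤ)`: the unique
algebra homomorphism with `Δw_n = Σ_{k=0}^{n} (n choose k) w_k ⊗ w_{n−k}`. -/
def Δb : FreeZ →ₐ[ℤ] FreeZ ⊗[ℤ] FreeZ :=
  FreeAlgebra.lift ℤ
    (fun n : ℕ+ => ∑ k ∈ Finset.range ((n : ℕ) + 1),
      ((n : ℕ).choose k : ℤ) • (w k ⊗ₜ[ℤ] w ((n : ℕ) - k)))

/-- The primitive comultiplication of `H_p = H_*(ΩΣ(⋁_{i≥1}S^{2i});ℤ)`: the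
unique algebra homomorphism with `Δξ_n = ξ_n⊗1 + 1⊗ξ_n`. -/
def Δp : FreeZ →ₐ[ℤ] FreeZ ⊗[ℤ] FreeZ :=
  FreeAlgebra.lift ℤ
    (fun n : ℕ+ => FreeAlgebra.ι ℤ n ⊗ₜ[ℤ] 1 + 1 ⊗ₜ[ℤ] FreeAlgebra.ι ℤ n)

/-- The submodule of homogeneous elements of weight `n` (homological degree
`2n`): the span of the products of generators whose indices sum to `n`. -/
def weightPiece (n : ℕ) : Submodule ℤ FreeZ :=
  Submodule.span ℤ
    {x : FreeZ | ∃ l : List ℕ+, (l.map fun i => (i : ℕ)).sum = n ∧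
      x = (l.map fun i => FreeAlgebra.ι ℤ i).prod}

instance (priority := 3000) tSMulInst : SMul ℤ (FreeZ ⊗[ℤ] FreeZ) := Algebra.toSMul
instance (priority := 3000) tMulActInst : MulAction ℤ (FreeZ ⊗[ℤ] FreeZ) :=
  DistribMulAction.toMulAction
instance (priority := 3000) fSMulInst : SMul ℤ FreeZ := Algebra.toSMul
instance (priority := 3000) fMulActInst : MulAction ℤ FreeZ := DistribMulAction.toMulAction

theorem E1 (n k i : ℕ) (h : i ≤ k) :
    n.choose k * k.choose i = n.choose i * (n - i).choose (k - i) := by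
  rcases le_or_gt k n with hkn | hnk
  · exact Nat.choose_mul h
  · rw [Nat.choose_eq_zero_of_lt hnk, Nat.zero_mul]
    rcases le_or_gt i n with hin | hni
    · rw [Nat.choose_eq_zero_of_lt (by omega : n - i < k - i), Nat.mul_zero]
    · rw [Nat.choose_eq_zero_of_lt hni, Nat.zero_mul]

theorem E2 (m v j : ℕ) :
    m.choose v * (m - v).choose j = m.choose j * (m - j).choose v := by
  have h1 := E1 m (v + j) v (Nat.le_add_right _ _)
  have h2 := E1 m (v + j) j (Nat.le_add_left _ _)
  rw [Nat.add_sub_cancel_left] at h1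
  rw [Nat.add_sub_cancel] at h2
  rw [← h1, ← h2, Nat.choose_symm_add]

theorem cube_shift {M : Type*} [AddCommGroup M] (N i : ℕ) (F : ℕ → M)
    (hN : ∀ k, N < k → F k = 0) (hi : ∀ k, k < i → F k = 0) :
    ∑ k ∈ Finset.range (N + 1), F k = ∑ v ∈ Finset.range (N + 1), F (i + v) := by
  have h1 : ∑ k ∈ Finset.range (N + 1), F k = ∑ k ∈ Finset.range (i + (N + 1)), F k := by
    apply Finset.sum_subset (Finset.range_subset_range.2 (by omega))
    intro k hk hk'
    exact hN k (by simp only [Finset.mem_range] at hk hk' ⊢; omega)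
  have h2 : ∑ v ∈ Finset.range (N + 1), F (i + v)
      = ∑ k ∈ Finset.Ico i (i + (N + 1)), F k := by
    rw [Finset.sum_Ico_eq_sum_range]
    simp
  have h3 : ∑ k ∈ Finset.Ico i (i + (N + 1)), F k
      = ∑ k ∈ Finset.range (i + (N + 1)), F k - ∑ k ∈ Finset.range i, F k := by
    rw [Finset.sum_Ico_eq_sub _ (by omega)]
  have h4 : ∑ k ∈ Finset.range i, F k = 0 :=
    Finset.sum_eq_zero fun k hk => hi k (Finset.mem_range.1 hk)
  rw [h1, h2, h3, h4, sub_zero]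

open Finset in
theorem CORE1 {M : Type*} [AddCommGroup M] [Module ℤ M] (n : ℕ) (P : ℕ → ℕ → ℕ → M) :
    ∑ k ∈ range (n+1), ∑ i ∈ range (k+1), ∑ j ∈ range (n-k+1),
      ((n.choose k * k.choose i * (n-k).choose j : ℕ) : ℤ) • P i j (k - i)
    = ∑ i ∈ range (n+1), ∑ j ∈ range (n+1), ∑ v ∈ range (n+1),
      ((n.choose i * (n-i).choose v * (n-i-v).choose j : ℕ) : ℤ) • P i j v := by
  have step1 :
      ∑ k ∈ range (n+1), ∑ i ∈ range (k+1), ∑ j ∈ range (n-k+1),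
        ((n.choose k * k.choose i * (n-k).choose j : ℕ) : ℤ) • P i j (k - i)
      = ∑ k ∈ range (n+1), ∑ i ∈ range (n+1), ∑ j ∈ range (n+1),
        ((n.choose k * k.choose i * (n-k).choose j : ℕ) : ℤ) • P i j (k - i) := by
    refine Finset.sum_congr rfl (fun k hk => ?_)
    rw [Finset.mem_range] at hk
    have hj : ∀ i, ∑ j ∈ range (n-k+1),
        ((n.choose k * k.choose i * (n-k).choose j : ℕ) : ℤ) • P i j (k - i)
        = ∑ j ∈ range (n+1),
        ((n.choose k * k.choose i * (n-k).choose j : ℕ) : ℤ) • P i j (k - i) := by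
      intro i
      apply Finset.sum_subset (Finset.range_subset_range.2 (by omega))
      intro j hj hj'
      rw [Finset.mem_range] at hj hj'
      rw [Nat.choose_eq_zero_of_lt (by omega : n - k < j)]
      simp
    calc ∑ i ∈ range (k+1), ∑ j ∈ range (n-k+1),
          ((n.choose k * k.choose i * (n-k).choose j : ℕ) : ℤ) • P i j (k - i)
        = ∑ i ∈ range (k+1), ∑ j ∈ range (n+1),
          ((n.choose k * k.choose i * (n-k).choose j : ℕ) : ℤ) • P i j (k - i) :=
          Finset.sum_congr rfl (fun i _ => hj i)
      _ = ∑ i ∈ range (n+1), ∑ j ∈ range (n+1),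
          ((n.choose k * k.choose i * (n-k).choose j : ℕ) : ℤ) • P i j (k - i) := by
          apply Finset.sum_subset (Finset.range_subset_range.2 (by omega))
          intro i hi hi'
          rw [Finset.mem_range] at hi hi'
          apply Finset.sum_eq_zero
          intro j _
          rw [Nat.choose_eq_zero_of_lt (by omega : k < i)]
          simp
  rw [step1]
  rw [Finset.sum_comm]
  refine Finset.sum_congr rfl (fun i hi => ?_)
  rw [Finset.sum_comm]
  refine Finset.sum_congr rfl (fun j hj => ?_)
  rw [Finset.mem_range] at hi hj
  have := cube_shift (M := M) n i
    (fun k => ((n.choose k * k.choose i * (n-k).choose j : ℕ) : ℤ) • P i j (k - i))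
    (fun k hk => by simp [Nat.choose_eq_zero_of_lt hk])
    (fun k hk => by simp [Nat.choose_eq_zero_of_lt hk])
  rw [this]
  refine Finset.sum_congr rfl (fun v hv => ?_)
  rw [Finset.mem_range] at hv
  have hc : n.choose (i+v) * (i+v).choose i * (n-(i+v)).choose j
      = n.choose i * (n-i).choose v * (n-i-v).choose j := by
    rw [E1 n (i+v) i (by omega), Nat.add_sub_cancel_left]
    congr 2
    omega
  beta_reduce
  rw [hc, Nat.add_sub_cancel_left]

open Finset in
theorem CORE2 {M : Type*} [AddCommGroup M] [Module ℤ M] (n : ℕ) (Q : ℕ → ℕ → ℕ → M) :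
    ∑ a ∈ range (n+1), ∑ u ∈ range (a+1), ∑ v ∈ range (n-a+1),
      ((n.choose a * a.choose u * (n-a).choose v : ℕ) : ℤ) • Q u (a - u) v
    = ∑ u ∈ range (n+1), ∑ j ∈ range (n+1), ∑ v ∈ range (n+1),
      ((n.choose u * (n-u).choose j * (n-u-j).choose v : ℕ) : ℤ) • Q u j v := by
  have h := CORE1 n (fun i j v => Q i v j)
  rw [h]
  exact Finset.sum_congr rfl (fun i _ => Finset.sum_comm)

open Finset in
theorem tensorConv (f g h l : ℕ → FreeZ) (n : ℕ) :
    ∑ k ∈ range (n+1), (n.choose k : ℤ) •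
      ((∑ i ∈ range (k+1), (k.choose i : ℤ) • (f i ⊗ₜ[ℤ] g (k-i))) *
       (∑ j ∈ range (n-k+1), ((n-k).choose j : ℤ) • (h j ⊗ₜ[ℤ] l (n-k-j))))
    = ∑ a ∈ range (n+1), (n.choose a : ℤ) •
        ((∑ u ∈ range (a+1), (a.choose u : ℤ) • (f u * h (a-u))) ⊗ₜ[ℤ]
         (∑ v ∈ range (n-a+1), ((n-a).choose v : ℤ) • (g v * l (n-a-v)))) := by
  have lhs_eq :
      ∑ k ∈ range (n+1), (n.choose k : ℤ) •
        ((∑ i ∈ range (k+1), (k.choose i : ℤ) • (f i ⊗ₜ[ℤ] g (k-i))) *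
         (∑ j ∈ range (n-k+1), ((n-k).choose j : ℤ) • (h j ⊗ₜ[ℤ] l (n-k-j))))
      = ∑ k ∈ range (n+1), ∑ i ∈ range (k+1), ∑ j ∈ range (n-k+1),
        ((n.choose k * k.choose i * (n-k).choose j : ℕ) : ℤ) •
          ((f i * h j) ⊗ₜ[ℤ] (g (k-i) * l (n-i-(k-i)-j))) := by
    refine Finset.sum_congr rfl (fun k hk => ?_)
    rw [Finset.mem_range] at hk
    rw [Finset.sum_mul_sum, Finset.smul_sum]
    refine Finset.sum_congr rfl (fun i hi => ?_)
    rw [Finset.smul_sum]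
    refine Finset.sum_congr rfl (fun j hj => ?_)
    rw [Finset.mem_range] at hi hj
    simp only [smul_mul_assoc, mul_smul_comm, smul_smul,
      Algebra.TensorProduct.tmul_mul_tmul]
    rw [show n-i-(k-i)-j = n-k-j by omega]
    congr 1
    push_cast
    ring
  have rhs_eq :
      ∑ a ∈ range (n+1), (n.choose a : ℤ) •
        ((∑ u ∈ range (a+1), (a.choose u : ℤ) • (f u * h (a-u))) ⊗ₜ[ℤ]
         (∑ v ∈ range (n-a+1), ((n-a).choose v : ℤ) • (g v * l (n-a-v))))
      = ∑ a ∈ range (n+1), ∑ u ∈ range (a+1), ∑ v ∈ range (n-a+1),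
        ((n.choose a * a.choose u * (n-a).choose v : ℕ) : ℤ) •
          ((f u * h (a-u)) ⊗ₜ[ℤ] (g v * l (n-u-(a-u)-v))) := by
    refine Finset.sum_congr rfl (fun a ha => ?_)
    rw [Finset.mem_range] at ha
    rw [TensorProduct.sum_tmul, Finset.smul_sum]
    refine Finset.sum_congr rfl (fun u hu => ?_)
    rw [TensorProduct.tmul_sum, Finset.smul_sum]
    refine Finset.sum_congr rfl (fun v hv => ?_)
    rw [Finset.mem_range] at hu hv
    simp only [TensorProduct.smul_tmul', TensorProduct.tmul_smul, smul_smul]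
    rw [show n-u-(a-u)-v = n-a-v by omega]
    congr 1
    push_cast
    ring
  rw [lhs_eq, rhs_eq]
  refine (CORE1 n (fun i j v => (f i * h j) ⊗ₜ[ℤ] (g v * l (n-i-v-j)))).trans
    (Eq.trans ?_ (CORE2 n (fun u j v => (f u * h j) ⊗ₜ[ℤ] (g v * l (n-u-j-v)))).symm)
  refine Finset.sum_congr rfl (fun i hi => ?_)
  refine Finset.sum_congr rfl (fun j hj => ?_)
  refine Finset.sum_congr rfl (fun v hv => ?_)
  rw [show n-i-v-j = n-i-j-v by omega, Nat.mul_assoc, E2 (n-i) v j, ← Nat.mul_assoc]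

def sa : ℕ → FreeZ
  | 0 => 1
  | (n+1) => -∑ k ∈ Finset.range (n+1),
      (((n+1).choose (k+1) : ℕ) : ℤ) • (w (k+1) * sa (n - k))
  decreasing_by exact Nat.lt_succ_of_le (Nat.sub_le n k)

def ws (m : ℕ) : FreeZ :=
  ∑ u ∈ Finset.range (m+1), ((m.choose u : ℕ) : ℤ) • (w u * sa (m-u))

theorem ws_zero : ws 0 = 1 := by simp [ws, w, sa]

theorem ws_succ (n : ℕ) : ws (n+1) = 0 := by
  rw [ws, Finset.sum_range_succ']
  simp only [Nat.choose_zero_right, Nat.cast_one, one_smul, Nat.sub_zero]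
  rw [show w 0 * sa (n+1) = sa (n+1) by rw [show w 0 = 1 from rfl, one_mul]]
  conv_lhs => rw [sa]
  simp only [Nat.succ_sub_succ]
  exact add_neg_cancel _

def Dw (n : ℕ) : FreeZ ⊗[ℤ] FreeZ :=
  ∑ i ∈ Finset.range (n+1), (n.choose i : ℤ) • (w i ⊗ₜ[ℤ] w (n-i))

def Ds (n : ℕ) : FreeZ ⊗[ℤ] FreeZ :=
  ∑ j ∈ Finset.range (n+1), (n.choose j : ℤ) • (sa j ⊗ₜ[ℤ] sa (n-j))

theorem Δb_w (n : ℕ) : Δb (w n) = Dw n := by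
  cases n with
  | zero =>
    simp [w, Dw, Algebra.TensorProduct.one_def]
  | succ n =>
    rw [show w (n+1) = FreeAlgebra.ι ℤ (⟨n+1, Nat.succ_pos n⟩ : ℕ+) from rfl, Δb]
    exact FreeAlgebra.lift_ι_apply _ _

theorem key_zero (N : ℕ) :
    ∑ k ∈ Finset.range (N+1), (N.choose k : ℤ) • (Dw k * Ds (N-k))
      = ∑ a ∈ Finset.range (N+1), (N.choose a : ℤ) • (ws a ⊗ₜ[ℤ] ws (N-a)) := by
  have t := tensorConv w w sa sa N
  simp only [Dw, Ds, ws]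
  exact t

theorem key_zero' (N : ℕ) (hN : N ≠ 0) :
    ∑ k ∈ Finset.range (N+1), (N.choose k : ℤ) • (Dw k * Ds (N-k)) = 0 := by
  rw [key_zero]
  apply Finset.sum_eq_zero
  intro a ha
  rw [Finset.mem_range] at ha
  rcases Nat.eq_zero_or_pos a with rfl | hpos
  · obtain ⟨M, rfl⟩ := Nat.exists_eq_succ_of_ne_zero hN
    rw [Nat.sub_zero, ws_succ, TensorProduct.tmul_zero, smul_zero]
  · obtain ⟨b, rfl⟩ := Nat.exists_eq_succ_of_ne_zero (Nat.pos_iff_ne_zero.1 hpos)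
    rw [ws_succ, TensorProduct.zero_tmul, smul_zero]

theorem Dw_zero : Dw 0 = 1 := by simp [Dw, w, Algebra.TensorProduct.one_def]

theorem Δb_sa (n : ℕ) : Δb (sa n) = Ds n := by
  induction n using Nat.strong_induction_on with
  | _ n ih =>
  match n, ih with
  | 0, _ =>
    rw [show sa 0 = 1 by rw [sa], map_one]
    rw [Ds]
    simp [show sa 0 = 1 by rw [sa], Algebra.TensorProduct.one_def]
  | (m+1), ih =>
    have expand : Δb (sa (m+1))
        = -∑ k ∈ Finset.range (m+1),
            ((m+1).choose (k+1) : ℤ) • (Dw (k+1) * Ds (m-k)) := by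
      conv_lhs => rw [sa]
      rw [map_neg, map_sum]
      congr 1
      refine Finset.sum_congr rfl (fun k hk => ?_)
      rw [Finset.mem_range] at hk
      rw [map_smul, map_mul, Δb_w, ih (m-k) (by omega)]
    have key := key_zero' (m+1) (Nat.succ_ne_zero m)
    rw [Finset.sum_range_succ'] at key
    simp only [Nat.choose_zero_right, Nat.cast_one, one_smul, Nat.sub_zero,
      Dw_zero, one_mul, Nat.succ_sub_succ] at key
    rw [expand]
    linear_combination (norm := module) -key

def pr (m : ℕ) : FreeZ :=
  ∑ k ∈ Finset.range (m+1), (m.choose k : ℤ) • (w (k+1) * sa (m-k))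

def Fa (k : ℕ) : FreeZ ⊗[ℤ] FreeZ :=
  ∑ i ∈ Finset.range (k+1), (k.choose i : ℤ) • (w (i+1) ⊗ₜ[ℤ] w (k-i))

def Fb (k : ℕ) : FreeZ ⊗[ℤ] FreeZ :=
  ∑ i ∈ Finset.range (k+1), (k.choose i : ℤ) • (w i ⊗ₜ[ℤ] w (k-i+1))

theorem Dw_succ (k : ℕ) : Dw (k+1) = Fa k + Fb k := by
  rw [Dw, Finset.sum_range_succ']
  simp only [Nat.succ_sub_succ, Nat.choose_succ_succ', Nat.choose_zero_right,
    Nat.cast_one, one_smul, Nat.sub_zero, Nat.cast_add, add_smul]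
  rw [Finset.sum_add_distrib]
  have hFb : Fb k = ∑ i ∈ Finset.range (k+1), ((k.choose (i+1) : ℤ)) •
      (w (i+1) ⊗ₜ[ℤ] w (k-i)) + (w 0 ⊗ₜ[ℤ] w (k+1)) := by
    rw [Fb, Finset.sum_range_succ']
    simp only [Nat.choose_zero_right, Nat.cast_one, one_smul, Nat.sub_zero]
    congr 1
    rw [Finset.sum_range_succ]
    rw [Nat.choose_succ_self, Nat.cast_zero, zero_smul, add_zero]
    refine Finset.sum_congr rfl (fun i hi => ?_)
    rw [Finset.mem_range] at hi
    rw [show k - (i+1) + 1 = k - i by omega]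
  rw [hFb, Fa]
  abel

theorem Δb_pr (m : ℕ) :
    Δb (pr m) = pr m ⊗ₜ[ℤ] 1 + 1 ⊗ₜ[ℤ] pr m := by
  have expand : Δb (pr m)
      = (∑ k ∈ Finset.range (m+1), (m.choose k : ℤ) • (Fa k * Ds (m-k)))
      + (∑ k ∈ Finset.range (m+1), (m.choose k : ℤ) • (Fb k * Ds (m-k))) := by
    rw [pr, map_sum, ← Finset.sum_add_distrib]
    refine Finset.sum_congr rfl (fun k hk => ?_)
    rw [map_smul, map_mul, Δb_w, Δb_sa, Dw_succ, add_mul, smul_add]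
  have hA : ∑ k ∈ Finset.range (m+1), (m.choose k : ℤ) • (Fa k * Ds (m-k))
      = pr m ⊗ₜ[ℤ] 1 := by
    have t := tensorConv (fun i => w (i+1)) w sa sa m
    rw [show ∑ k ∈ Finset.range (m+1), (m.choose k : ℤ) • (Fa k * Ds (m-k))
      = ∑ a ∈ Finset.range (m+1), (m.choose a : ℤ) • (pr a ⊗ₜ[ℤ] ws (m-a)) by
        simp only [Fa, Ds, pr, ws]; exact t]
    rw [Finset.sum_range_succ]
    rw [Finset.sum_eq_zero (fun a ha => ?_), Nat.choose_self, Nat.cast_one,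
      one_smul, Nat.sub_self, ws_zero, zero_add]
    rw [Finset.mem_range] at ha
    rw [show m - a = (m - a - 1) + 1 by omega, ws_succ, TensorProduct.tmul_zero,
      smul_zero]
  have hB : ∑ k ∈ Finset.range (m+1), (m.choose k : ℤ) • (Fb k * Ds (m-k))
      = 1 ⊗ₜ[ℤ] pr m := by
    have t := tensorConv w (fun i => w (i+1)) sa sa m
    rw [show ∑ k ∈ Finset.range (m+1), (m.choose k : ℤ) • (Fb k * Ds (m-k))
      = ∑ a ∈ Finset.range (m+1), (m.choose a : ℤ) • (ws a ⊗ₜ[ℤ] pr (m-a)) by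
        simp only [Fb, Ds, pr, ws]; exact t]
    rw [Finset.sum_range_succ']
    rw [Finset.sum_eq_zero (fun a ha => ?_), Nat.choose_zero_right, Nat.cast_one,
      one_smul, Nat.sub_zero, ws_zero, zero_add]
    rw [ws_succ, TensorProduct.zero_tmul, smul_zero]
  rw [expand, hA, hB]

def pp (n : ℕ+) : FreeZ := pr ((n : ℕ) - 1)

theorem pr_split (m : ℕ) : pr m = w (m+1) +
    ∑ k ∈ Finset.range m, (m.choose k : ℤ) • (w (k+1) * sa (m-k)) := by
  rw [pr, Finset.sum_range_succ, Nat.choose_self, Nat.cast_one, one_smul,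
    Nat.sub_self, show sa 0 = 1 by rw [sa], mul_one, add_comm]

theorem w_coe (n : ℕ+) : w ((n : ℕ) - 1 + 1) = FreeAlgebra.ι ℤ n := by
  obtain ⟨n, hn⟩ := n
  cases n with
  | zero => exact absurd hn (by omega)
  | succ m => rfl

theorem pp_sub (n : ℕ+) : pp n - FreeAlgebra.ι ℤ n
    = ∑ k ∈ Finset.range ((n:ℕ)-1), (((n:ℕ)-1).choose k : ℤ) •
        (w (k+1) * sa ((n:ℕ)-1-k)) := by
  rw [pp, pr_split, w_coe, add_sub_cancel_left]

def gensLt (n : ℕ+) : Set FreeZ :=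
  FreeAlgebra.ι ℤ '' {i : ℕ+ | (i : ℕ) < (n : ℕ)}

def gensUpTo (n : ℕ) : Subalgebra ℤ FreeZ :=
  Algebra.adjoin ℤ (FreeAlgebra.ι ℤ '' {i : ℕ+ | (i : ℕ) ≤ n})

theorem gens_eq (n : ℕ+) :
    Algebra.adjoin ℤ (gensLt n) = gensUpTo ((n : ℕ) - 1) := by
  have hset : {i : ℕ+ | (i : ℕ) < (n : ℕ)} = {i : ℕ+ | (i : ℕ) ≤ (n : ℕ) - 1} := by
    ext i
    have := i.pos
    have := n.pos
    simp only [Set.mem_setOf_eq]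
    omega
  rw [gensUpTo, gensLt, hset]

theorem w_mem_gens {j n : ℕ} (h : j ≤ n) : w j ∈ gensUpTo n := by
  cases j with
  | zero => exact one_mem _
  | succ m =>
    exact Algebra.subset_adjoin ⟨⟨m+1, Nat.succ_pos m⟩, h, rfl⟩

theorem sa_mem_gens : ∀ m, ∀ {n}, m ≤ n → sa m ∈ gensUpTo n := by
  intro m
  induction m using Nat.strong_induction_on with
  | _ m ih =>
  match m, ih with
  | 0, _ => intro n _; rw [show sa 0 = 1 by rw [sa]]; exact one_mem _
  | (m+1), ih =>
    intro n hn
    rw [sa]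
    refine neg_mem (sum_mem fun k hk => ?_)
    rw [Finset.mem_range] at hk
    refine Subalgebra.smul_mem _ (mul_mem (w_mem_gens (by omega)) ?_) _
    exact ih (m - k) (by omega) (by omega)

theorem pp_sub_mem (n : ℕ+) :
    pp n - FreeAlgebra.ι ℤ n ∈ Algebra.adjoin ℤ (gensLt n) := by
  rw [gens_eq, pp_sub]
  refine sum_mem fun k hk => ?_
  rw [Finset.mem_range] at hk
  exact Subalgebra.smul_mem _
    (mul_mem (w_mem_gens (by omega)) (sa_mem_gens _ (by omega))) _

theorem hom_agree_on {φ ψ : FreeZ →ₐ[ℤ] FreeZ} {s : Set FreeZ}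
    (h : ∀ x ∈ s, φ x = ψ x) {x} (hx : x ∈ Algebra.adjoin ℤ s) : φ x = ψ x := by
  have hle : Algebra.adjoin ℤ s ≤ AlgHom.equalizer φ ψ :=
    Algebra.adjoin_le fun y hy => h y hy
  exact hle hx

def qq : ℕ+ → FreeZ := fun n =>
  FreeAlgebra.ι ℤ n -
    (FreeAlgebra.lift ℤ (fun i : ℕ+ =>
      if h : (i : ℕ) < (n : ℕ) then qq i else 0))
      (pp n - FreeAlgebra.ι ℤ n)
termination_by n => (n : ℕ)
decreasing_by exact h

def Elift : FreeZ →ₐ[ℤ] FreeZ := FreeAlgebra.lift ℤ (fun n : ℕ+ => pp n)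

def E'lift : FreeZ →ₐ[ℤ] FreeZ := FreeAlgebra.lift ℤ qq

def Qlift (n : ℕ+) : FreeZ →ₐ[ℤ] FreeZ :=
  FreeAlgebra.lift ℤ (fun i : ℕ+ => if h : (i : ℕ) < (n : ℕ) then qq i else 0)

theorem qq_eq (n : ℕ+) :
    qq n = FreeAlgebra.ι ℤ n - Qlift n (pp n - FreeAlgebra.ι ℤ n) := by
  rw [qq]; rfl

theorem E'_agree (n : ℕ+) :
    E'lift (pp n - FreeAlgebra.ι ℤ n) = Qlift n (pp n - FreeAlgebra.ι ℤ n) := by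
  refine hom_agree_on (fun x hx => ?_) (pp_sub_mem n)
  obtain ⟨i, hi, rfl⟩ := hx
  rw [E'lift, Qlift, FreeAlgebra.lift_ι_apply, FreeAlgebra.lift_ι_apply,
    dif_pos (show (i : ℕ) < (n : ℕ) from hi)]

theorem E'_pp (n : ℕ+) : E'lift (pp n) = FreeAlgebra.ι ℤ n := by
  have h1 : E'lift (pp n) = E'lift (FreeAlgebra.ι ℤ n)
      + E'lift (pp n - FreeAlgebra.ι ℤ n) := by
    rw [← map_add]; congr 1; abel
  have h2 : E'lift (FreeAlgebra.ι ℤ n) = qq n := FreeAlgebra.lift_ι_apply _ _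
  rw [h1, h2, E'_agree, qq_eq]
  abel

theorem E_qq : ∀ N, ∀ n : ℕ+, (n : ℕ) ≤ N → Elift (qq n) = FreeAlgebra.ι ℤ n := by
  intro N
  induction N with
  | zero => intro n hn; exact absurd hn (by have := n.pos; omega)
  | succ N ih =>
    intro n hn
    have fix : Elift (Qlift n (pp n - FreeAlgebra.ι ℤ n))
        = pp n - FreeAlgebra.ι ℤ n := by
      have hcomp : (Elift.comp (Qlift n)) (pp n - FreeAlgebra.ι ℤ n)
          = (AlgHom.id ℤ FreeZ) (pp n - FreeAlgebra.ι ℤ n) := by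
        refine hom_agree_on (fun x hx => ?_) (pp_sub_mem n)
        obtain ⟨i, hi, rfl⟩ := hx
        rw [AlgHom.comp_apply, Qlift, FreeAlgebra.lift_ι_apply,
          dif_pos (show (i : ℕ) < (n : ℕ) from hi), AlgHom.id_apply]
        exact ih i (by have := i.pos
                       have : (i : ℕ) < (n : ℕ) := hi
                       omega)
      simpa using hcomp
    have h2 : Elift (FreeAlgebra.ι ℤ n) = pp n := FreeAlgebra.lift_ι_apply _ _
    rw [qq_eq, map_sub, fix, h2]
    abel

theorem WP_mul {a b : ℕ} {x y : FreeZ} (hx : x ∈ weightPiece a)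
    (hy : y ∈ weightPiece b) : x * y ∈ weightPiece (a + b) := by
  have hle : weightPiece a * weightPiece b ≤ weightPiece (a + b) := by
    rw [weightPiece, weightPiece, Submodule.span_mul_span]
    refine Submodule.span_le.2 ?_
    rintro z hz
    obtain ⟨u, hu, v, hv, rfl⟩ := hz
    obtain ⟨l1, hl1, rfl⟩ := hu
    obtain ⟨l2, hl2, rfl⟩ := hv
    refine Submodule.subset_span ⟨l1 ++ l2, ?_, ?_⟩
    · simp at hl1 hl2 ⊢
      rw [hl1, hl2]
    · simp
  exact hle (Submodule.mul_mem_mul hx hy)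

theorem one_WP : (1 : FreeZ) ∈ weightPiece 0 :=
  Submodule.subset_span ⟨[], by simp, by simp⟩

theorem ι_WP (i : ℕ+) : FreeAlgebra.ι ℤ i ∈ weightPiece (i : ℕ) :=
  Submodule.subset_span ⟨[i], by simp, by simp⟩

theorem w_WP (j : ℕ) : w j ∈ weightPiece j := by
  cases j with
  | zero => exact one_WP
  | succ m => exact ι_WP ⟨m+1, Nat.succ_pos m⟩

theorem sa_WP : ∀ m, sa m ∈ weightPiece m := by
  intro m
  induction m using Nat.strong_induction_on with
  | _ m ih =>
  match m, ih with
  | 0, _ => rw [show sa 0 = 1 by rw [sa]]; exact one_WP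
  | (m+1), ih =>
    rw [sa]
    refine neg_mem (Submodule.sum_mem _ fun k hk => ?_)
    rw [Finset.mem_range] at hk
    refine Submodule.smul_mem _ _ ?_
    rw [show m + 1 = (k+1) + (m-k) by omega]
    exact WP_mul (w_WP (k+1)) (ih (m-k) (by omega))

theorem pr_WP (m : ℕ) : pr m ∈ weightPiece (m+1) := by
  rw [pr]
  refine Submodule.sum_mem _ fun k hk => ?_
  rw [Finset.mem_range] at hk
  refine Submodule.smul_mem _ _ ?_
  rw [show m + 1 = (k+1) + (m-k) by omega]
  exact WP_mul (w_WP (k+1)) (sa_WP (m-k))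

theorem pp_WP (n : ℕ+) : pp n ∈ weightPiece (n : ℕ) := by
  have := pr_WP ((n:ℕ) - 1)
  rw [show (n:ℕ) - 1 + 1 = (n:ℕ) by have := n.pos; omega] at this
  exact this

theorem comp1 : Elift.comp E'lift = AlgHom.id ℤ FreeZ := by
  apply FreeAlgebra.hom_ext
  funext i
  show Elift (E'lift (FreeAlgebra.ι ℤ i)) = FreeAlgebra.ι ℤ i
  rw [show E'lift (FreeAlgebra.ι ℤ i) = qq i from FreeAlgebra.lift_ι_apply _ _]
  exact E_qq (i : ℕ) i le_rfl

theorem comp2 : E'lift.comp Elift = AlgHom.id ℤ FreeZ := by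
  apply FreeAlgebra.hom_ext
  funext i
  show E'lift (Elift (FreeAlgebra.ι ℤ i)) = FreeAlgebra.ι ℤ i
  rw [show Elift (FreeAlgebra.ι ℤ i) = pp i from FreeAlgebra.lift_ι_apply _ _]
  exact E'_pp i

theorem Δb_pp (n : ℕ+) :
    Δb (pp n) = pp n ⊗ₜ[ℤ] 1 + 1 ⊗ₜ[ℤ] pp n := Δb_pr _

theorem hop : Δb.comp Elift = (Algebra.TensorProduct.map Elift Elift).comp Δp := by
  apply FreeAlgebra.hom_ext
  funext i
  show Δb (Elift (FreeAlgebra.ι ℤ i))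
      = Algebra.TensorProduct.map Elift Elift (Δp (FreeAlgebra.ι ℤ i))
  rw [show Elift (FreeAlgebra.ι ℤ i) = pp i from FreeAlgebra.lift_ι_apply _ _,
    Δb_pp, show Δp (FreeAlgebra.ι ℤ i)
      = FreeAlgebra.ι ℤ i ⊗ₜ[ℤ] 1 + 1 ⊗ₜ[ℤ] FreeAlgebra.ι ℤ i from
      FreeAlgebra.lift_ι_apply _ _,
    map_add, Algebra.TensorProduct.map_tmul, Algebra.TensorProduct.map_tmul,
    map_one, show Elift (FreeAlgebra.ι ℤ i) = pp i from FreeAlgebra.lift_ι_apply _ _]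


/-- `H_b` (binomial coproduct) and `H_p` (primitive
coproduct) are isomorphic as graded Hopf algebras over `ℤ`: there is an
algebra isomorphism `e : H_p ≃ H_b` compatible with the two coproducts which
sends the degree-`2n` generator `ξ_n` to a homogeneous element of degree
`2n`.  (E.g. `ξ₁ ↦ w₁`, `ξ₂ ↦ w₂ − w₁w₁`, `ξ₃ ↦ w₃ − 3w₂w₁ + 2w₁w₁w₁`.) -/
theorem binomial_hopf_iso_primitive_hopf :
    ∃ e : FreeZ ≃ₐ[ℤ] FreeZ,
      (∀ x : FreeZ,
        Δb (e x) = TensorProduct.map e.toLinearMap e.toLinearMap (Δp x)) ∧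
      ∀ n : ℕ+, e (FreeAlgebra.ι ℤ n) ∈ weightPiece n := by
  refine ⟨AlgEquiv.ofAlgHom Elift E'lift comp1 comp2, ?_, ?_⟩
  · intro x
    have hcoe : ∀ y : FreeZ,
        (AlgEquiv.ofAlgHom Elift E'lift comp1 comp2) y = Elift y := fun y => rfl
    have hmap : ∀ z : FreeZ ⊗[ℤ] FreeZ,
        TensorProduct.map (AlgEquiv.ofAlgHom Elift E'lift comp1 comp2).toLinearMap
          (AlgEquiv.ofAlgHom Elift E'lift comp1 comp2).toLinearMap z
        = Algebra.TensorProduct.map Elift Elift z := by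
      intro z
      induction z with
      | zero => simp
      | tmul u v =>
        rw [TensorProduct.map_tmul, Algebra.TensorProduct.map_tmul]
        rfl
      | add u v hu hv => rw [map_add, map_add, hu, hv]
    rw [hcoe, hmap, show Δb (Elift x)
      = (Δb.comp Elift) x from rfl, hop]
    rfl
  · intro n
    have hcoe : (AlgEquiv.ofAlgHom Elift E'lift comp1 comp2) (FreeAlgebra.ι ℤ n)
        = pp n := FreeAlgebra.lift_ι_apply _ _
    rw [hcoe]
    exact pp_WP n

end
end
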